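/- For a Poisson random variable X with mean μ > 0 and any positive integer q, the strict inequality (E[X_q])² > E[X_q(X_q-1)] holds, where X_q = min(X, q). -/

import Mathlib

/-- The Poisson probability mass function with real mean parameter `μ`. -/
noncomputable def poissonPMF (μ : ℝ) (n : ℕ) : ℝ := Real.exp (-μ) * μ ^ n / n.factorial

namespace Stmt5Aux

lemma p_pos {μ : ℝ} (hμ : 0 < μ) (n : ℕ) : 0 < poissonPMF μ n := by
  unfold poissonPMF; positivity

lemma p_rec (μ : ℝ) (n : ℕ) :
    ((n : ℝ) + 1) * poissonPMF μ (n + 1) = μ * poissonPMF μ n := by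
  unfold poissonPMF
  rw [Nat.factorial_succ]
  have h1 : (n.factorial : ℝ) ≠ 0 := Nat.cast_ne_zero.mpr n.factorial_ne_zero
  have h2 : ((n : ℝ) + 1) ≠ 0 := by positivity
  push_cast
  field_simp
  ring

lemma hasSum_p {μ : ℝ} (hμ : 0 < μ) : HasSum (poissonPMF μ) 1 := by
  have h := ProbabilityTheory.poissonPMFRealSum μ.toNNReal
  have he : (fun n => ProbabilityTheory.poissonPMFReal μ.toNNReal n) = poissonPMF μ := by
    funext n
    unfold ProbabilityTheory.poissonPMFReal poissonPMF
    rw [Real.coe_toNNReal _ hμ.le]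
  rw [← he]; exact h

lemma hasSum_np {μ : ℝ} (hμ : 0 < μ) :
    HasSum (fun n : ℕ => (n : ℝ) * poissonPMF μ n) μ := by
  have h1 : HasSum (fun n : ℕ => ((n : ℝ) + 1) * poissonPMF μ (n + 1)) μ := by
    have := (hasSum_p hμ).mul_left μ
    simpa [p_rec μ] using this
  have h2 := (hasSum_nat_add_iff (f := fun n : ℕ => (n : ℝ) * poissonPMF μ n) 1).mp
    (by simpa using h1)
  simpa using h2

lemma min_nonneg' (n q : ℕ) : (0:ℝ) ≤ min (n:ℝ) (q:ℝ) :=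
  le_min (Nat.cast_nonneg n) (Nat.cast_nonneg q)

lemma summable_min {μ : ℝ} (hμ : 0 < μ) (q : ℕ) :
    Summable (fun n : ℕ => poissonPMF μ n * (min n q : ℝ)) := by
  apply Summable.of_nonneg_of_le
    (fun n => mul_nonneg (p_pos hμ n).le (min_nonneg' n q))
    (fun n => mul_le_mul_of_nonneg_left (min_le_right _ _) (p_pos hμ n).le)
    ((hasSum_p hμ).summable.mul_right (q : ℝ))

lemma summable_desc {μ : ℝ} (hμ : 0 < μ) (q : ℕ) :
    Summable (fun n : ℕ => poissonPMF μ n * ((min n q).descFactorial 2 : ℝ)) := by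
  apply Summable.of_nonneg_of_le
    (fun n => mul_nonneg (p_pos hμ n).le (Nat.cast_nonneg _))
    (fun n => ?_)
    ((hasSum_p hμ).summable.mul_right ((q : ℝ) ^ 2))
  have h : ((min n q).descFactorial 2 : ℝ) ≤ (q : ℝ) ^ 2 := by
    have h1 : (min n q).descFactorial 2 ≤ (min n q) ^ 2 := Nat.descFactorial_le_pow _ _
    have h2 : (min n q) ^ 2 ≤ q ^ 2 := Nat.pow_le_pow_left (Nat.min_le_right n q) 2
    exact_mod_cast h1.trans h2
  exact mul_le_mul_of_nonneg_left h (p_pos hμ n).le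

lemma min_succ_cast (n q : ℕ) :
    (min (n + 1 : ℕ) q : ℝ) = (min n q : ℝ) + (if n < q then (1 : ℝ) else 0) := by
  rw [← Nat.cast_min, ← Nat.cast_min (m := n)]
  have : min (n + 1) q = min n q + (if n < q then 1 else 0) := by
    split_ifs with h <;> omega
  rw [this]
  split_ifs <;> push_cast <;> ring

/-- Chen's identity specialised to f = min(·, q). -/
lemma chen {μ : ℝ} (hμ : 0 < μ) (q : ℕ) :
    HasSum (fun n : ℕ => (n : ℝ) * poissonPMF μ n * (min n q : ℝ))
      (μ * (∑' n : ℕ, poissonPMF μ n * (min n q : ℝ))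
        + μ * (∑ n ∈ Finset.range q, poissonPMF μ n)) := by
  set p := poissonPMF μ with hp
  have hind : HasSum (fun n : ℕ => μ * (p n * (if n < q then (1:ℝ) else 0)))
      (μ * ∑ n ∈ Finset.range q, p n) := by
    have h0 := hasSum_sum_of_ne_finset_zero
      (f := fun n : ℕ => p n * (if n < q then (1:ℝ) else 0)) (s := Finset.range q) (L := SummationFilter.unconditional ℕ)
      (by intro n hn; simp [Finset.mem_range] at hn; simp [Nat.not_lt.mpr hn])
    have hsum : (∑ n ∈ Finset.range q, (p n * if n < q then (1:ℝ) else 0))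
        = ∑ n ∈ Finset.range q, p n :=
      Finset.sum_congr rfl (fun n hn => by simp [Finset.mem_range.mp hn])
    rw [hsum] at h0
    exact h0.mul_left μ
  have hmin : HasSum (fun n : ℕ => μ * (p n * (min n q : ℝ)))
      (μ * ∑' n : ℕ, p n * (min n q : ℝ)) :=
    ((summable_min hμ q).hasSum).mul_left μ
  have hsh : HasSum (fun n : ℕ => ((n:ℝ)+1) * p (n+1) * (min (n+1 : ℕ) q : ℝ))
      (μ * (∑' n : ℕ, p n * (min n q : ℝ)) + μ * ∑ n ∈ Finset.range q, p n) := by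
    have h := hmin.add hind
    convert h using 2 with n
    rw [hp, p_rec μ n, min_succ_cast]
    ring
  have h2 := (hasSum_nat_add_iff
    (f := fun n : ℕ => (n : ℝ) * p n * (min n q : ℝ)) 1).mp (by push_cast at hsh ⊢; exact hsh)
  simpa using h2

lemma desc_cast (n q : ℕ) :
    ((min n q).descFactorial 2 : ℝ)
      = (min n q : ℝ) * (min n q : ℝ) - (min n q : ℝ) := by
  rw [← Nat.cast_min]
  rcases Nat.eq_zero_or_eq_succ_pred (min n q) with h | h
  · simp [h]
  · rw [h, Nat.descFactorial_succ, Nat.descFactorial_succ, Nat.descFactorial_zero]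
    push_cast
    ring

end Stmt5Aux

open Stmt5Aux

/-- For `X ~ Poisson(μ)` with `μ > 0` and any positive integer `q`,
`(E[X_q])² > E[X_q (X_q - 1)]`, where `X_q = min(X, q)`. -/
theorem stmt5 (μ : ℝ) (hμ : 0 < μ) (q : ℕ) (hq : 1 ≤ q) :
    (∑' n : ℕ, poissonPMF μ n * (min n q : ℝ)) ^ 2 >
      ∑' n : ℕ, poissonPMF μ n * ((min n q).descFactorial 2 : ℝ) := by
  set p := poissonPMF μ with hp
  set A : ℝ := ∑' n : ℕ, p n * (min n q : ℝ) with hA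
  set B : ℝ := ∑' n : ℕ, p n * ((min n q).descFactorial 2 : ℝ) with hB
  set C : ℝ := ∑ n ∈ Finset.range q, p n with hC
  have hSA : HasSum (fun n : ℕ => p n * (min n q : ℝ)) A := (summable_min hμ q).hasSum
  have hSB : HasSum (fun n : ℕ => p n * ((min n q).descFactorial 2 : ℝ)) B :=
    (summable_desc hμ q).hasSum
  -- the moment identity
  have hcomb : HasSum (fun n : ℕ => (n : ℝ) * p n * (min n q : ℝ))
      (B + A + (q : ℝ) * (μ - A)) := by
    have h := (hSB.add hSA).add (((hasSum_np hμ).sub hSA).mul_left (q : ℝ))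
    convert h using 2 with n
    rw [desc_cast]
    rcases le_total n q with h' | h'
    · have : min (n : ℝ) (q : ℝ) = (n : ℝ) := min_eq_left (by exact_mod_cast h')
      rw [this]; ring
    · have : min (n : ℝ) (q : ℝ) = (q : ℝ) := min_eq_right (by exact_mod_cast h')
      rw [this]; ring
  have key : μ * A + μ * C = B + A + (q : ℝ) * (μ - A) :=
    (chen hμ q).unique hcomb
  -- bounds
  have hAq : A ≤ (q : ℝ) := by
    have := Summable.tsum_le_tsum
      (f := fun n : ℕ => p n * (min n q : ℝ)) (g := fun n : ℕ => p n * (q : ℝ))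
      (fun n => mul_le_mul_of_nonneg_left (min_le_right _ _) (p_pos hμ n).le)
      (summable_min hμ q) ((hasSum_p hμ).summable.mul_right _)
    rw [((hasSum_p hμ).mul_right (q : ℝ)).tsum_eq, one_mul] at this
    exact this
  have hAμ : A ≤ μ := by
    have := Summable.tsum_le_tsum
      (f := fun n : ℕ => p n * (min n q : ℝ)) (g := fun n : ℕ => (n : ℝ) * p n)
      (fun n => by
        have h1 : p n * (min n q : ℝ) ≤ p n * (n : ℝ) :=
          mul_le_mul_of_nonneg_left (min_le_left _ _) (p_pos hμ n).le
        show p n * (min n q : ℝ) ≤ (n : ℝ) * p n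
        rw [mul_comm ((n : ℝ)) (p n)]
        exact h1)
      (summable_min hμ q) (hasSum_np hμ).summable
    rw [(hasSum_np hμ).tsum_eq] at this
    exact this
  -- μ * C < A
  have hμC : μ * C < A := by
    have hpartial : ∑ n ∈ Finset.range (q + 2), p n * (min n q : ℝ) ≤ A :=
      Summable.sum_le_tsum _ (fun n _ => mul_nonneg (p_pos hμ n).le (min_nonneg' n q))
        (summable_min hμ q)
    have e1 : ∑ n ∈ Finset.range (q + 2), p n * (min n q : ℝ)
        = (∑ n ∈ Finset.range (q + 1), (n : ℝ) * p n) + p (q + 1) * (q : ℝ) := by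
      rw [Finset.sum_range_succ]
      congr 1
      · exact Finset.sum_congr rfl (fun n hn => by
          have hn' : n ≤ q := by
            have := Finset.mem_range.mp hn; omega
          have : min (n : ℝ) (q : ℝ) = (n : ℝ) := min_eq_left (by exact_mod_cast hn')
          rw [this, mul_comm])
      · congr 1
        exact min_eq_right (by exact_mod_cast (by omega : q ≤ q + 1))
    have e2 : (∑ n ∈ Finset.range (q + 1), (n : ℝ) * p n) = μ * C := by
      rw [Finset.sum_range_succ' (fun n => (n : ℝ) * p n) q]
      simp only [Nat.cast_zero, zero_mul, add_zero]
      rw [hC, Finset.mul_sum]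
      exact Finset.sum_congr rfl (fun n _ => by
        push_cast
        exact p_rec μ n)
    have hpos : 0 < p (q + 1) * (q : ℝ) :=
      mul_pos (p_pos hμ (q + 1)) (by exact_mod_cast hq)
    nlinarith [hpartial, e1, e2, hpos]
  -- conclude
  have hfact : 0 ≤ (μ - A) * ((q : ℝ) - A) :=
    mul_nonneg (by linarith) (by linarith)
  nlinarith [key, hfact, hμC]
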